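/- In a maximal dense pattern x (w.r.t. string s and density threshold ρ), every internal solid block is a maximal solid block of s: if b = x[i..j] is a solid block with x[i-1] = x[j+1] = ∘, then b cannot be extended by a solid character on either side without decreasing its frequency in s. -/

import Mathlib

/-- Number of don't care characters (`none`) in a pattern. -/
def dc {α : Type*} (x : List (Option α)) : ℕ := (x.filter Option.isNone).length

/-- Density of a pattern: 1 - dc(x)/|x|. -/
def density {α : Type*} (x : List (Option α)) : ℚ := 1 - (dc x : ℚ) / (x.length : ℚ)

/-- A pattern is dense w.r.t. threshold ρ if its density is at least ρ. -/
def IsDense {α : Type*} (ρ : ℚ) (x : List (Option α)) : Prop := ρ ≤ density x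

/-- Pattern x occurs in pattern y at position ℓ. -/
def occursAt {α : Type*} (x y : List (Option α)) (ℓ : ℕ) : Prop :=
  ℓ + x.length ≤ y.length ∧
    ∀ i < x.length, x.getD i none = none ∨ x.getD i none = y.getD (ℓ + i) none

/-- Frequency of pattern x in string s. -/
noncomputable def freq {α : Type*} (x : List (Option α)) (s : List α) : ℕ :=
  {ℓ | occursAt x (s.map some) ℓ}.ncard

/-- Pattern y contains pattern x iff x occurs in y at some position. -/
def Contains {α : Type*} (y x : List (Option α)) : Prop := ∃ ℓ, occursAt x y ℓ

/-- y subsumes x in s iff y contains x and they have the same frequency in s. -/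
def Subsumes {α : Type*} (s : List α) (y x : List (Option α)) : Prop :=
  Contains y x ∧ freq y s = freq x s

/-- x is a maximal dense pattern in s: dense, and not subsumed by any other dense
pattern. -/
def MaximalDense {α : Type*} (s : List α) (ρ : ℚ) (x : List (Option α)) : Prop :=
  IsDense ρ x ∧ ∀ y, IsDense ρ y → Subsumes s y x → y = x

section Helpers

variable {α : Type*}

lemma occFinite (x : List (Option α)) (s : List α) :
    {ℓ | occursAt x (s.map some) ℓ}.Finite := by
  apply (Set.finite_Iic s.length).subset
  intro ℓ hℓ
  have h := hℓ.1
  simp only [List.length_map] at h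
  exact le_trans (Nat.le_add_right ℓ x.length) h

lemma dc_append (u v : List (Option α)) : dc (u ++ v) = dc u + dc v := by
  simp [dc, List.filter_append]

lemma replace_contra (s : List α) (ρ : ℚ) (x : List (Option α))
    (hx : MaximalDense s ρ x) (p : ℕ) (hp : p < x.length)
    (hnone : x.getD p none = none) (c : α)
    (H : ∀ ℓ, occursAt x (s.map some) ℓ → (s.map some).getD (ℓ + p) none = some c) :
    False := by
  set y := x.set p (some c) with hy
  have hlen : y.length = x.length := List.length_set ..
  have hxp : x[p] = none := by rwa [List.getD_eq_getElem x none hp] at hnone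
  have hyk : ∀ k, k ≠ p → y.getD k none = x.getD k none := by
    intro k hk
    simp [hy, List.getD_eq_getElem?_getD, List.getElem?_set_ne (Ne.symm hk)]
  have hyp : y.getD p none = some c := by
    simp [hy, List.getD_eq_getElem?_getD, List.getElem?_set_self (l := x) hp]
  -- dc decreases
  have hdc : dc y + 1 = dc x := by
    have hysplit : y = x.take p ++ some c :: x.drop (p + 1) := by
      rw [hy, List.set_eq_take_append_cons_drop, if_pos hp]
    have hxsplit : x = x.take p ++ none :: x.drop (p + 1) := by
      conv_lhs => rw [← List.take_append_drop p x, List.drop_eq_getElem_cons hp, hxp]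
    rw [hysplit]
    conv_rhs => rw [hxsplit]
    simp [dc_append, dc]
    ring
  have hxlen0 : (0 : ℚ) < (x.length : ℚ) := by exact_mod_cast Nat.zero_lt_of_lt hp
  have hdense : IsDense ρ y := by
    refine le_trans hx.1 ?_
    unfold density
    rw [hlen]
    have : (dc y : ℚ) ≤ (dc x : ℚ) := by exact_mod_cast Nat.le_of_succ_le_succ (by omega)
    have hdiv : (dc y : ℚ) / (x.length : ℚ) ≤ (dc x : ℚ) / (x.length : ℚ) :=
      (div_le_div_iff_of_pos_right hxlen0).2 this
    linarith
  have hne : y ≠ x := by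
    intro h
    rw [h] at hyp
    rw [hnone] at hyp
    exact Option.some_ne_none c hyp.symm
  -- y contains x
  have hcont : Contains y x := by
    refine ⟨0, by simp [hlen], fun k hk => ?_⟩
    by_cases hkp : k = p
    · subst hkp; exact Or.inl hnone
    · right; rw [Nat.zero_add, hyk k hkp]
  -- occurrence sets equal
  have hset : {ℓ | occursAt y (s.map some) ℓ} = {ℓ | occursAt x (s.map some) ℓ} := by
    ext ℓ
    constructor
    · rintro ⟨h1, h2⟩
      rw [hlen] at h1
      refine ⟨h1, fun k hk => ?_⟩
      by_cases hkp : k = p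
      · subst hkp; exact Or.inl hnone
      · rcases h2 k (by rwa [hlen]) with h | h
        · rw [hyk k hkp] at h; exact Or.inl h
        · rw [hyk k hkp] at h; exact Or.inr h
    · rintro ⟨h1, h2⟩
      refine ⟨by rwa [hlen], fun k hk => ?_⟩
      rw [hlen] at hk
      by_cases hkp : k = p
      · subst hkp
        right
        rw [hyp, H ℓ ⟨h1, h2⟩]
      · rcases h2 k hk with h | h
        · rw [← hyk k hkp] at h; exact Or.inl h
        · rw [← hyk k hkp] at h; exact Or.inr h
  have hfreq : freq y s = freq x s := by
    unfold freq; rw [hset]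
  exact hne (hx.2 y hdense ⟨hcont, hfreq⟩)

end Helpers

/-- Proposition 1 of the paper: in a maximal dense pattern x, every internal solid
block b = x[i..j] (flanked by don't cares on both sides) is a maximal solid block of s:
extending b by any solid character on either side strictly decreases its frequency. -/
theorem internal_solid_block_maximal {α : Type*} (s : List α) (ρ : ℚ)
    (hρ0 : 0 < ρ) (hρ1 : ρ ≤ 1)
    (x : List (Option α)) (hx : MaximalDense s ρ x)
    (b : List α) (i j : ℕ) (hi : 1 ≤ i) (hij : i ≤ j) (hj : j + 1 < x.length)
    (hblock : (x.drop i).take (j + 1 - i) = b.map some)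
    (hleft : x.getD (i - 1) none = none) (hright : x.getD (j + 1) none = none) :
    ∀ c : α,
      freq (b.map some ++ [some c]) s < freq (b.map some) s ∧
      freq (some c :: b.map some) s < freq (b.map some) s := by
  intro c
  have hblen : b.length = j + 1 - i := by
    have h := congrArg List.length hblock
    simp only [List.length_take, List.length_drop, List.length_map] at h
    omega
  have hij1 : i + b.length = j + 1 := by omega
  -- occurrences of x yield occurrences of b at offset i
  have central : ∀ ℓ, occursAt x (s.map some) ℓ →
      occursAt (b.map some) (s.map some) (ℓ + i) := by
    rintro ℓ ⟨h1, h2⟩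
    refine ⟨?_, fun k hk => ?_⟩
    · simp only [List.length_map] at *
      omega
    · simp only [List.length_map] at hk
      have hk' : k < j + 1 - i := by omega
      have hxk : x.getD (i + k) none = (b.map some).getD k none := by
        have h := congrArg (fun l => List.getD l k none) hblock
        simpa [List.getD_eq_getElem?_getD, List.getElem?_take, List.getElem?_drop, hk'] using h
      have hbk : (b.map some).getD k none ≠ none := by
        simp [List.getD_eq_getElem?_getD, List.getElem?_map, List.getElem?_eq_getElem hk]
      rcases h2 (i + k) (by omega) with h | h
      · exact absurd (hxk ▸ h) hbk
      · right; rw [← hxk, Nat.add_assoc]; exact h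
  constructor
  · -- right extension
    have hsub : {ℓ | occursAt (b.map some ++ [some c]) (s.map some) ℓ} ⊆
        {ℓ | occursAt (b.map some) (s.map some) ℓ} := by
      rintro ℓ ⟨h1, h2⟩
      refine ⟨?_, fun k hk => ?_⟩
      · simp only [List.length_append, List.length_map, List.length_cons,
          List.length_nil] at *
        omega
      · simp only [List.length_map] at hk
        have hk2 : k < (b.map some ++ [some c]).length := by
          simp only [List.length_append, List.length_map, List.length_cons, List.length_nil]
          omega
        have heq : (b.map some ++ [some c]).getD k none = (b.map some).getD k none := by
          simp [List.getD_eq_getElem?_getD, List.getElem?_append, List.length_map, hk]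
        rw [← heq]
        exact h2 k hk2
    have hle : freq (b.map some ++ [some c]) s ≤ freq (b.map some) s :=
      Set.ncard_le_ncard hsub (occFinite _ s)
    rcases lt_or_eq_of_le hle with h | h
    · exact h
    · exfalso
      have hseteq : {ℓ | occursAt (b.map some ++ [some c]) (s.map some) ℓ} =
          {ℓ | occursAt (b.map some) (s.map some) ℓ} :=
        Set.eq_of_subset_of_ncard_le hsub (le_of_eq h.symm) (occFinite _ s)
      refine replace_contra s ρ x hx (j + 1) hj hright c (fun ℓ hocc => ?_)
      have hmem : ℓ + i ∈ {ℓ | occursAt (b.map some ++ [some c]) (s.map some) ℓ} := by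
        rw [hseteq]; exact central ℓ hocc
      obtain ⟨g1, g2⟩ := hmem
      have hlt : (b.map some).length < (b.map some ++ [some c]).length := by simp
      have hval : (b.map some ++ [some c]).getD (b.map some).length none = some c := by
        simp [List.getD_eq_getElem?_getD, List.getElem?_concat_length]
      rcases g2 (b.map some).length hlt with h' | h'
      · rw [hval] at h'; exact absurd h' (Option.some_ne_none c)
      · rw [hval] at h'
        have hidx : ℓ + i + (b.map some).length = ℓ + (j + 1) := by
          simp only [List.length_map]; omega
        rw [hidx] at h'
        exact h'.symm
  · -- left extension
    have hsub : (fun ℓ => ℓ + 1) '' {ℓ | occursAt (some c :: b.map some) (s.map some) ℓ} ⊆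
        {ℓ | occursAt (b.map some) (s.map some) ℓ} := by
      rintro m ⟨ℓ, ⟨h1, h2⟩, rfl⟩
      refine ⟨?_, fun k hk => ?_⟩
      · simp only [List.length_cons, List.length_map] at *
        omega
      · simp only [List.length_map] at hk
        have hk2 : k + 1 < (some c :: b.map some).length := by
          simp only [List.length_cons, List.length_map]; omega
        rcases h2 (k + 1) hk2 with h | h
        · rw [List.getD_cons_succ] at h; exact Or.inl h
        · rw [List.getD_cons_succ] at h
          right
          rw [show ℓ + 1 + k = ℓ + (k + 1) by omega]
          exact h
    have hcard : freq (some c :: b.map some) s =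
        ((fun ℓ => ℓ + 1) '' {ℓ | occursAt (some c :: b.map some) (s.map some) ℓ}).ncard := by
      rw [Set.ncard_image_of_injective _ (add_left_injective 1)]
      rfl
    have hle : freq (some c :: b.map some) s ≤ freq (b.map some) s := by
      rw [hcard]
      exact Set.ncard_le_ncard hsub (occFinite _ s)
    rcases lt_or_eq_of_le hle with h | h
    · exact h
    · exfalso
      have hseteq : (fun ℓ => ℓ + 1) '' {ℓ | occursAt (some c :: b.map some) (s.map some) ℓ} =
          {ℓ | occursAt (b.map some) (s.map some) ℓ} := by
        refine Set.eq_of_subset_of_ncard_le hsub ?_ (occFinite _ s)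
        rw [← hcard]
        exact le_of_eq h.symm
      have hp : i - 1 < x.length := by omega
      refine replace_contra s ρ x hx (i - 1) hp hleft c (fun ℓ hocc => ?_)
      have hmem : ℓ + i ∈ (fun ℓ => ℓ + 1) ''
          {ℓ | occursAt (some c :: b.map some) (s.map some) ℓ} := by
        rw [hseteq]; exact central ℓ hocc
      obtain ⟨m, ⟨g1, g2⟩, hm⟩ := hmem
      have hm2 : m + 1 = ℓ + i := hm
      have hm' : m = ℓ + (i - 1) := by omega
      have h0 : 0 < (some c :: b.map some).length := by simp
      rcases g2 0 h0 with h' | h'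
      · rw [List.getD_cons_zero] at h'; exact absurd h' (Option.some_ne_none c)
      · rw [List.getD_cons_zero] at h'
        rw [Nat.add_zero, hm'] at h'
        exact h'.symm
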